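/- Let u₀ : ℝ → ℝ be a bounded measurable function. If u₀(x) ≥ 0 for almost every x, then u(t, x) = u₀(x − t) is an entropy solution of u_t + (|u|)_x = 0 on Π = (0, ∞) × ℝ: for every k ∈ ℝ and every nonnegative C¹ function f with compact support in Π, ∫_Π ( |u − k| ∂_t f + sgn(u − k) (|u| − |k|) ∂_x f ) dt dx ≥ 0. Likewise, if u₀(x) ≤ 0 for almost every x, then u(t, x) = u₀(x + t) is an entropy solution of u_t + (|u|)_x = 0 on Π in the same sense. -/

import Mathlib

open MeasureTheory


/-- FTC: integral of the derivative of a compactly supported function is zero. -/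
lemma ftc_zero {h h' : ℝ → ℝ} (hd : ∀ t, HasDerivAt h (h' t) t) (hc : Continuous h')
    {R : ℝ} (hR : 0 ≤ R) (h0 : ∀ t, R < |t| → h t = 0) (h0' : ∀ t, R < |t| → h' t = 0) :
    ∫ t, h' t = 0 := by
  have hz : ∀ x ∉ Set.Ioc (-(R+1)) (R+1), h' x = 0 := by
    intro x hx
    apply h0'
    simp only [Set.mem_Ioc, not_and_or, not_lt, not_le] at hx
    rcases hx with hx | hx
    · rw [abs_of_nonpos (by linarith)]; linarith
    · rw [abs_of_pos (by linarith)]; linarith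
  rw [← setIntegral_eq_integral_of_forall_compl_eq_zero hz,
    ← intervalIntegral.integral_of_le (by linarith),
    intervalIntegral.integral_eq_sub_of_hasDerivAt (fun t _ => hd t)
      (hc.intervalIntegrable _ _),
    h0 (R+1) (by rw [abs_of_pos (by linarith)]; linarith),
    h0 (-(R+1)) (by rw [abs_of_nonpos (by linarith)]; linarith), sub_zero]

/-- the shear homeomorphism `(t, y) ↦ (t, y + c t)`. -/
def shear (c : ℝ) : (ℝ × ℝ) ≃ₜ (ℝ × ℝ) where
  toFun z := (z.1, z.2 + c * z.1)
  invFun z := (z.1, z.2 - c * z.1)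
  left_inv z := by simp
  right_inv z := by simp
  continuous_toFun := by fun_prop
  continuous_invFun := by fun_prop

/-- transfer a.e. statements on ℝ to the plane along `z ↦ z.2 - c z.1`. -/
lemma ae_comp_shear {P : ℝ → Prop} (h : ∀ᵐ x : ℝ, P x) (c : ℝ) :
    ∀ᵐ z : ℝ × ℝ, P (z.2 - c * z.1) := by
  obtain ⟨N, hNsub, hNmeas, hN0⟩ :=
    exists_measurable_superset_of_null (ae_iff.1 h)
  have hmeasB : MeasurableSet {z : ℝ × ℝ | z.2 - c * z.1 ∈ N} := by
    have : Measurable fun z : ℝ × ℝ => z.2 - c * z.1 := by fun_prop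
    exact this hNmeas
  have hB0 : (volume : Measure (ℝ × ℝ)) {z : ℝ × ℝ | z.2 - c * z.1 ∈ N} = 0 := by
    rw [show (volume : Measure (ℝ × ℝ)) = (volume : Measure ℝ).prod volume from rfl,
      MeasureTheory.Measure.measure_prod_null hmeasB]
    refine Filter.Eventually.of_forall fun t => ?_
    have : (Prod.mk t ⁻¹' {z : ℝ × ℝ | z.2 - c * z.1 ∈ N}) =
        (fun x => x + -(c * t)) ⁻¹' N := by
      ext x; simp [sub_eq_add_neg]
    show volume (Prod.mk t ⁻¹' {z : ℝ × ℝ | z.2 - c * z.1 ∈ N}) = 0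
    rw [this, measure_preimage_add_right volume _ N]
    exact hN0
  have h2 : ∀ᵐ z : ℝ × ℝ, z.2 - c * z.1 ∉ N := by
    rw [ae_iff]
    simpa using hB0
  filter_upwards [h2] with z hz
  by_contra hcon
  exact hz (hNsub hcon)


/-- pointwise entropy identity when `u ≥ 0`. -/
lemma sign_identity_pos {u k : ℝ} (hu : 0 ≤ u) :
    Real.sign (u - k) * (|u| - |k|) = |u - k| + 2 * min k 0 := by
  rw [abs_of_nonneg hu]
  rcases lt_trichotomy u k with h | h | h
  · have hk : 0 < k := lt_of_le_of_lt hu h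
    rw [Real.sign_of_neg (by linarith), abs_of_neg (by linarith : u - k < 0),
      abs_of_pos hk, min_eq_right hk.le]
    ring
  · subst h
    rw [sub_self, Real.sign_zero, abs_of_nonneg hu, min_eq_right hu]
    simp
  · rw [Real.sign_of_pos (by linarith), abs_of_pos (by linarith : 0 < u - k)]
    rcases le_or_gt 0 k with hk | hk
    · rw [abs_of_nonneg hk, min_eq_right hk]; ring
    · rw [abs_of_neg hk, min_eq_left hk.le]; ring

/-- pointwise entropy identity when `u ≤ 0`. -/
lemma sign_identity_neg {u k : ℝ} (hu : u ≤ 0) :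
    Real.sign (u - k) * (|u| - |k|) = -|u - k| + 2 * max k 0 := by
  rw [abs_of_nonpos hu]
  rcases lt_trichotomy u k with h | h | h
  · rw [Real.sign_of_neg (by linarith), abs_of_neg (by linarith : u - k < 0)]
    rcases le_or_gt 0 k with hk | hk
    · rw [abs_of_nonneg hk, max_eq_left hk]; ring
    · rw [abs_of_neg hk, max_eq_right hk.le]; ring
  · subst h
    rw [sub_self, Real.sign_zero, abs_of_nonpos hu, max_eq_right hu]
    simp
  · have hk : k < 0 := lt_of_lt_of_le h hu
    rw [Real.sign_of_pos (by linarith), abs_of_pos (by linarith : 0 < u - k),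
      abs_of_neg hk, max_eq_right hk.le]
    ring

section Plane

variable {f : ℝ × ℝ → ℝ}

lemma cont_fderiv_apply (hf : ContDiff ℝ 1 f) (w : ℝ × ℝ) :
    Continuous fun z => fderiv ℝ f z w :=
  (hf.continuous_fderiv one_ne_zero).clm_apply continuous_const

lemma integrable_fderiv_apply (hf : ContDiff ℝ 1 f) (hcs : HasCompactSupport f) (w : ℝ × ℝ) :
    Integrable (fun z => fderiv ℝ f z w) volume :=
  (cont_fderiv_apply hf w).integrable_of_hasCompactSupport (hcs.fderiv_apply ℝ w)

/-- `∫ ∂ₓ f = 0`. -/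
lemma integral_dx_zero (hf : ContDiff ℝ 1 f) (hcs : HasCompactSupport f) :
    ∫ z : ℝ × ℝ, fderiv ℝ f z (0, 1) = 0 := by
  obtain ⟨R, hR0, hRsub⟩ : ∃ R : ℝ, 0 ≤ R ∧ tsupport f ⊆ Metric.closedBall 0 R := by
    obtain ⟨R, hR⟩ := hcs.isCompact.isBounded.subset_closedBall 0
    exact ⟨max R 0, le_max_right _ _, hR.trans (Metric.closedBall_subset_closedBall
      (le_max_left _ _))⟩
  have hout : ∀ z : ℝ × ℝ, R < ‖z‖ → z ∉ tsupport f := by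
    intro z hz hmem
    have := hRsub hmem
    rw [Metric.mem_closedBall, dist_zero_right] at this
    linarith
  rw [show (volume : Measure (ℝ × ℝ)) = (volume : Measure ℝ).prod volume from rfl,
    MeasureTheory.integral_prod _
      (by rw [← MeasureTheory.Measure.volume_eq_prod]
          exact integrable_fderiv_apply hf hcs (0, 1))]
  have inner : ∀ t : ℝ, (∫ x : ℝ, fderiv ℝ f (t, x) (0, 1)) = 0 := by
    intro t
    have hd : ∀ x : ℝ, HasDerivAt (fun x => f (t, x)) (fderiv ℝ f (t, x) (0, 1)) x := by
      intro x
      have hL : HasDerivAt (fun x : ℝ => ((t, x) : ℝ × ℝ)) ((0 : ℝ), (1 : ℝ)) x :=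
        (hasDerivAt_const x t).prodMk (hasDerivAt_id x)
      exact ((hf.differentiable one_ne_zero (t, x)).hasFDerivAt.comp_hasDerivAt x hL : _)
    refine ftc_zero hd ((cont_fderiv_apply hf (0, 1)).comp (by fun_prop)) hR0 ?_ ?_
    · intro x hx
      refine image_eq_zero_of_notMem_tsupport (hout (t, x) ?_)
      exact lt_of_lt_of_le hx (by simpa using norm_snd_le ((t, x) : ℝ × ℝ))
    · intro x hx
      have hz : (t, x) ∉ tsupport f :=
        hout (t, x) (lt_of_lt_of_le hx (by simpa using norm_snd_le ((t, x) : ℝ × ℝ)))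
      have : fderiv ℝ f (t, x) = 0 := by
        have hsub := support_fderiv_subset ℝ (f := f)
        by_contra hne
        exact hz (hsub (Function.mem_support.2 hne))
      simp [this]
  simp only [inner, integral_zero]

/-- main cancellation: the transport term integrates to zero. -/
lemma integral_transport_zero (v : ℝ → ℝ) (hv : Measurable v) (M : ℝ)
    (hbd : ∀ x, |v x| ≤ M) (c : ℝ) (hf : ContDiff ℝ 1 f) (hcs : HasCompactSupport f) :
    ∫ z : ℝ × ℝ, v (z.2 - c * z.1) *
      (fderiv ℝ f z (1, 0) + c * fderiv ℝ f z (0, 1)) = 0 := by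
  obtain ⟨R, hR0, hRsub⟩ : ∃ R : ℝ, 0 ≤ R ∧ tsupport f ⊆ Metric.closedBall 0 R := by
    obtain ⟨R, hR⟩ := hcs.isCompact.isBounded.subset_closedBall 0
    exact ⟨max R 0, le_max_right _ _, hR.trans (Metric.closedBall_subset_closedBall
      (le_max_left _ _))⟩
  have hout : ∀ z : ℝ × ℝ, R < ‖z‖ → z ∉ tsupport f := by
    intro z hz hmem
    have := hRsub hmem
    rw [Metric.mem_closedBall, dist_zero_right] at this
    linarith
  set g : ℝ × ℝ → ℝ := fun z => fderiv ℝ f z (1, c) with hg_def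
  have hgc : Continuous g := cont_fderiv_apply hf (1, c)
  have hgcs : HasCompactSupport g := hcs.fderiv_apply ℝ (1, c)
  have hgeq : ∀ z : ℝ × ℝ, fderiv ℝ f z (1, 0) + c * fderiv ℝ f z (0, 1) = g z := by
    intro z
    have hvec : ((1 : ℝ), c) = (1, 0) + c • ((0 : ℝ), (1 : ℝ)) := by simp [Prod.ext_iff]
    simp only [hg_def, hvec, map_add, ContinuousLinearMap.map_smul, smul_eq_mul]
  simp only [hgeq]
  -- measurability of the factor
  have hvmeas : Measurable fun z : ℝ × ℝ => v (z.2 - c * z.1) :=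
    hv.comp (by fun_prop)
  have hInt1 : Integrable (fun z : ℝ × ℝ => v (z.2 - c * z.1) * g z) volume :=
    (hgc.integrable_of_hasCompactSupport hgcs).bdd_mul
      hvmeas.aestronglyMeasurable
      (Filter.Eventually.of_forall fun z => by rw [Real.norm_eq_abs]; exact hbd _)
  rw [show (volume : Measure (ℝ × ℝ)) = (volume : Measure ℝ).prod volume from rfl,
    MeasureTheory.integral_prod _
      (by rw [← MeasureTheory.Measure.volume_eq_prod]; exact hInt1)]
  -- translate in the inner integral
  have step1 : ∀ t : ℝ, (∫ x : ℝ, v (x - c * t) * g (t, x))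
      = ∫ y : ℝ, v y * g (t, y + c * t) := by
    intro t
    rw [← MeasureTheory.integral_add_right_eq_self
      (fun x : ℝ => v (x - c * t) * g (t, x)) (c * t)]
    simp
  simp only [step1]
  -- swap the order of integration
  have hG : Integrable (Function.uncurry fun t y : ℝ => v y * g (t, y + c * t))
      ((volume : Measure ℝ).prod volume) := by
    rw [← MeasureTheory.Measure.volume_eq_prod]
    have hgshear : Continuous fun z : ℝ × ℝ => g (z.1, z.2 + c * z.1) :=
      hgc.comp (by fun_prop)
    have hgshearcs : HasCompactSupport fun z : ℝ × ℝ => g (z.1, z.2 + c * z.1) :=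
      hgcs.comp_homeomorph (shear c)
    exact (hgshear.integrable_of_hasCompactSupport hgshearcs).bdd_mul
      ((hv.comp measurable_snd).aestronglyMeasurable)
      (Filter.Eventually.of_forall fun z => by rw [Real.norm_eq_abs]; exact hbd _)
  rw [MeasureTheory.integral_integral_swap hG]
  have inner : ∀ y : ℝ, (∫ t : ℝ, v y * g (t, y + c * t)) = 0 := by
    intro y
    rw [MeasureTheory.integral_const_mul]
    have hd : ∀ t : ℝ, HasDerivAt (fun t => f (t, y + c * t)) (g (t, y + c * t)) t := by
      intro t
      have hL : HasDerivAt (fun t : ℝ => ((t, y + c * t) : ℝ × ℝ)) ((1 : ℝ), c) t := by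
        refine (hasDerivAt_id t).prodMk ?_
        simpa using ((hasDerivAt_id t).const_mul c).const_add y
      exact ((hf.differentiable one_ne_zero (t, y + c * t)).hasFDerivAt.comp_hasDerivAt t hL : _)
    have h0 : ∀ t : ℝ, R < |t| → f (t, y + c * t) = 0 := by
      intro t ht
      refine image_eq_zero_of_notMem_tsupport (hout (t, y + c * t) ?_)
      exact lt_of_lt_of_le ht (by simpa using norm_fst_le ((t, y + c * t) : ℝ × ℝ))
    have h0' : ∀ t : ℝ, R < |t| → g (t, y + c * t) = 0 := by
      intro t ht
      have hz : (t, y + c * t) ∉ tsupport f :=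
        hout _ (lt_of_lt_of_le ht (by simpa using norm_fst_le ((t, y + c * t) : ℝ × ℝ)))
      have : fderiv ℝ f (t, y + c * t) = 0 := by
        have hsub := support_fderiv_subset ℝ (f := f)
        by_contra hne
        exact hz (hsub (Function.mem_support.2 hne))
      simp [hg_def, this]
    rw [ftc_zero hd (hgc.comp (by fun_prop)) hR0 h0 h0', mul_zero]
  simp only [inner, integral_zero]

end Plane




/-- A bounded measurable `u` on `Π = (0,∞) × ℝ` is an entropy solution of
`u_t + (|u|)_x = 0` if for every `k ∈ ℝ` and every nonnegative `C¹` function `f`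
compactly supported in `Π`,
`∫_Π (|u−k| ∂_t f + sgn(u−k)(|u|−|k|) ∂_x f) dt dx ≥ 0`,
where `∂_t f (z) = Df(z)(1,0)` and `∂_x f (z) = Df(z)(0,1)`. -/
def IsEntropySolutionAbsFlux (u : ℝ × ℝ → ℝ) : Prop :=
  ∀ k : ℝ, ∀ f : ℝ × ℝ → ℝ, ContDiff ℝ 1 f → HasCompactSupport f →
    tsupport f ⊆ Set.Ioi (0 : ℝ) ×ˢ Set.univ → (∀ z, 0 ≤ f z) →
    0 ≤ ∫ z in Set.Ioi (0 : ℝ) ×ˢ (Set.univ : Set ℝ),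
        (|u z - k| * fderiv ℝ f z (1, 0) +
          Real.sign (u z - k) * (|u z| - |k|) * fderiv ℝ f z (0, 1))

lemma entropy_integral_zero (F : ℝ × ℝ → ℝ) (v : ℝ → ℝ) (hv : Measurable v)
    (M : ℝ) (hbd : ∀ x, |v x| ≤ M) (c C₀ : ℝ) {f : ℝ × ℝ → ℝ}
    (hf : ContDiff ℝ 1 f) (hcs : HasCompactSupport f)
    (hsupp : tsupport f ⊆ Set.Ioi (0 : ℝ) ×ˢ Set.univ)
    (haeeq : ∀ᵐ z : ℝ × ℝ, F z =
      v (z.2 - c * z.1) * (fderiv ℝ f z (1, 0) + c * fderiv ℝ f z (0, 1)) +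
        C₀ * fderiv ℝ f z (0, 1)) :
    ∫ z in Set.Ioi (0 : ℝ) ×ˢ (Set.univ : Set ℝ), F z = 0 := by
  set G : ℝ × ℝ → ℝ := fun z =>
    v (z.2 - c * z.1) * (fderiv ℝ f z (1, 0) + c * fderiv ℝ f z (0, 1)) +
      C₀ * fderiv ℝ f z (0, 1) with hG_def
  have h1 : ∫ z in Set.Ioi (0:ℝ) ×ˢ (Set.univ : Set ℝ), F z
      = ∫ z in Set.Ioi (0:ℝ) ×ˢ (Set.univ : Set ℝ), G z :=
    integral_congr_ae (ae_restrict_of_ae haeeq)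
  have hGzero : ∀ z ∉ Set.Ioi (0:ℝ) ×ˢ (Set.univ : Set ℝ), G z = 0 := by
    intro z hz
    have hzt : z ∉ tsupport f := fun hc => hz (hsupp hc)
    have hfd : fderiv ℝ f z = 0 := by
      have hsub := support_fderiv_subset ℝ (f := f)
      by_contra hne
      exact hzt (hsub (Function.mem_support.2 hne))
    simp [hG_def, hfd]
  have hIntMain : Integrable (fun z : ℝ × ℝ =>
      v (z.2 - c * z.1) * (fderiv ℝ f z (1, 0) + c * fderiv ℝ f z (0, 1))) volume := by
    refine Integrable.bdd_mul ?_
      ((hv.comp (by fun_prop : Measurable fun z : ℝ × ℝ => z.2 - c * z.1)).aestronglyMeasurable)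
      (Filter.Eventually.of_forall fun z => by rw [Real.norm_eq_abs]; exact hbd _)
    exact (integrable_fderiv_apply hf hcs (1, 0)).add
      ((integrable_fderiv_apply hf hcs (0, 1)).const_mul c)
  have hIntC : Integrable (fun z : ℝ × ℝ => C₀ * fderiv ℝ f z (0, 1)) volume :=
    (integrable_fderiv_apply hf hcs (0, 1)).const_mul C₀
  rw [h1, setIntegral_eq_integral_of_forall_compl_eq_zero hGzero, hG_def,
    MeasureTheory.integral_add hIntMain hIntC,
    integral_transport_zero v hv M hbd c hf hcs,
    MeasureTheory.integral_const_mul, integral_dx_zero hf hcs]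
  ring

/-- For a bounded measurable `u₀ : ℝ → ℝ`, if `u₀ ≥ 0` a.e. then
`u(t,x) = u₀(x − t)` is an entropy solution of `u_t + (|u|)_x = 0` on `(0,∞) × ℝ`;
likewise, if `u₀ ≤ 0` a.e. then `u(t,x) = u₀(x + t)` is an entropy solution. -/
theorem signed_translates_are_entropy_solutions
    (u₀ : ℝ → ℝ) (hmeas : Measurable u₀) (M : ℝ) (hbd : ∀ x, |u₀ x| ≤ M) :
    ((∀ᵐ x : ℝ, 0 ≤ u₀ x) → IsEntropySolutionAbsFlux fun z => u₀ (z.2 - z.1)) ∧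
    ((∀ᵐ x : ℝ, u₀ x ≤ 0) → IsEntropySolutionAbsFlux fun z => u₀ (z.2 + z.1)) := by
  have hvmeas : ∀ k : ℝ, Measurable fun y => |u₀ y - k| :=
    fun k => (hmeas.sub measurable_const).abs
  have hvbd : ∀ k : ℝ, ∀ x, abs (|u₀ x - k|) ≤ M + |k| := by
    intro k x
    rw [abs_abs]
    calc |u₀ x - k| ≤ |u₀ x| + |k| := by
          simpa [Real.norm_eq_abs] using norm_sub_le (u₀ x) k
      _ ≤ M + |k| := by have := hbd x; linarith
  constructor
  · intro h₁ k f hf hcs hsupp hpos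
    refine le_of_eq (entropy_integral_zero _ (fun y => |u₀ y - k|)
      (hvmeas k) (M + |k|) (hvbd k) 1 (2 * min k 0) hf hcs hsupp ?_).symm
    filter_upwards [ae_comp_shear h₁ 1] with z hz
    have harg : z.2 - 1 * z.1 = z.2 - z.1 := by ring
    rw [harg] at hz
    show |u₀ (z.2 - z.1) - k| * fderiv ℝ f z (1, 0) +
        Real.sign (u₀ (z.2 - z.1) - k) * (|u₀ (z.2 - z.1)| - |k|) * fderiv ℝ f z (0, 1)
      = |u₀ (z.2 - 1 * z.1) - k| *
          (fderiv ℝ f z (1, 0) + 1 * fderiv ℝ f z (0, 1)) +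
        (2 * min k 0) * fderiv ℝ f z (0, 1)
    rw [harg, sign_identity_pos hz]
    ring
  · intro h₂ k f hf hcs hsupp hpos
    refine le_of_eq (entropy_integral_zero _ (fun y => |u₀ y - k|)
      (hvmeas k) (M + |k|) (hvbd k) (-1) (2 * max k 0) hf hcs hsupp ?_).symm
    filter_upwards [ae_comp_shear h₂ (-1)] with z hz
    have harg : z.2 - (-1) * z.1 = z.2 + z.1 := by ring
    rw [harg] at hz
    show |u₀ (z.2 + z.1) - k| * fderiv ℝ f z (1, 0) +
        Real.sign (u₀ (z.2 + z.1) - k) * (|u₀ (z.2 + z.1)| - |k|) * fderiv ℝ f z (0, 1)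
      = |u₀ (z.2 - (-1) * z.1) - k| *
          (fderiv ℝ f z (1, 0) + (-1) * fderiv ℝ f z (0, 1)) +
        (2 * max k 0) * fderiv ℝ f z (0, 1)
    rw [harg, sign_identity_neg hz]
    ring
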